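/- (Axiom 7 verification for the von Neumann reality measure: flagging.) Let ρ t (t : Fin n) be density matrices on (Fin dA × Fin dB), let p t be nonnegative reals with ∑ t, p t = 1, and define the flagged state ρ_f on ((Fin dA × Fin dB) × Fin n) by ρ_f = ∑ t, p t • (ρ t ⊗ₖ Matrix.stdBasisMatrix t t 1). Let Φ'_A be the pinching on the enlarged space by the projectors ((A i) ⊗ₖ 1) ⊗ₖ 1. Then S(Φ'_A(ρ_f)) − S(ρ_f) = ∑ t, p t · (S(Φ_A(ρ t)) − S(ρ t)); that is, the mean A-reality is unchanged under flagging. -/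

import Mathlib

open Matrix Kronecker BigOperators
open scoped ComplexOrder

/-- The unrevealed-measurement (pinching) map on the bipartite system:
`Φ_A(ρ) = ∑ i, (A i ⊗ₖ 1) * ρ * (A i ⊗ₖ 1)`. -/
noncomputable def pinch {dA dB : ℕ} {ι : Type*} [Fintype ι]
    (A : ι → Matrix (Fin dA) (Fin dA) ℂ)
    (ρ : Matrix (Fin dA × Fin dB) (Fin dA × Fin dB) ℂ) :
    Matrix (Fin dA × Fin dB) (Fin dA × Fin dB) ℂ :=
  ∑ i, ((A i) ⊗ₖ (1 : Matrix (Fin dB) (Fin dB) ℂ)) * ρ *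
    ((A i) ⊗ₖ (1 : Matrix (Fin dB) (Fin dB) ℂ))

/-- The pinching on the flag-enlarged space, by the projectors `((A i) ⊗ₖ 1) ⊗ₖ 1`. -/
noncomputable def pinchFlag {dA dB n : ℕ} {ι : Type*} [Fintype ι]
    (A : ι → Matrix (Fin dA) (Fin dA) ℂ)
    (ρ : Matrix ((Fin dA × Fin dB) × Fin n) ((Fin dA × Fin dB) × Fin n) ℂ) :
    Matrix ((Fin dA × Fin dB) × Fin n) ((Fin dA × Fin dB) × Fin n) ℂ :=
  ∑ i, (((A i) ⊗ₖ (1 : Matrix (Fin dB) (Fin dB) ℂ)) ⊗ₖ (1 : Matrix (Fin n) (Fin n) ℂ)) * ρ *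
    (((A i) ⊗ₖ (1 : Matrix (Fin dB) (Fin dB) ℂ)) ⊗ₖ (1 : Matrix (Fin n) (Fin n) ℂ))

/-- The von Neumann entropy of a Hermitian matrix, via its eigenvalues. -/
noncomputable def vnEntropy {m : Type*} [Fintype m] [DecidableEq m]
    {ρ : Matrix m m ℂ} (hρ : ρ.IsHermitian) : ℝ :=
  ∑ k, Real.negMulLog (hρ.eigenvalues k)

section AuxCharpoly

open Polynomial

variable {m : Type*} [Fintype m] [DecidableEq m]

lemma charpoly_unitary_conj (U : Matrix.unitaryGroup m ℂ) (B : Matrix m m ℂ) :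
    ((U : Matrix m m ℂ) * B * star (U : Matrix m m ℂ)).charpoly = B.charpoly := by
  have hU : (U : Matrix m m ℂ) * star (U : Matrix m m ℂ) = 1 :=
    (Matrix.mem_unitaryGroup_iff).mp U.2
  set f : Matrix m m ℂ →+* Matrix m m ℂ[X] := RingHom.mapMatrix (Polynomial.C : ℂ →+* ℂ[X])
    with hf
  have hU' : star (U : Matrix m m ℂ) * (U : Matrix m m ℂ) = 1 :=
    (Matrix.mem_unitaryGroup_iff').mp U.2
  have hcomm' : Matrix.scalar m (X : ℂ[X]) * f (star (U : Matrix m m ℂ)) =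
      f (star (U : Matrix m m ℂ)) * Matrix.scalar m (X : ℂ[X]) :=
    (Matrix.scalar_commute (n := m) (X : ℂ[X]) (fun r => Commute.all X r)
      (f (star (U : Matrix m m ℂ))))
  have hcm : charmatrix ((U : Matrix m m ℂ) * B * star (U : Matrix m m ℂ))
      = f (U : Matrix m m ℂ) * charmatrix B * f (star (U : Matrix m m ℂ)) := by
    unfold Matrix.charmatrix
    rw [mul_sub, sub_mul, mul_assoc (f (U : Matrix m m ℂ)), hcomm', ← mul_assoc,
      ← map_mul f, hU, _root_.map_one, one_mul, ← map_mul f, ← map_mul f]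
  unfold Matrix.charpoly
  rw [hcm, Matrix.det_mul, Matrix.det_mul, mul_comm, ← mul_assoc, ← Matrix.det_mul, ← map_mul f,
    hU', _root_.map_one, Matrix.det_one, one_mul]

lemma charpoly_diagonal (v : m → ℂ) :
    (Matrix.diagonal v).charpoly = ∏ i, (X - C (v i)) := by
  have h : charmatrix (Matrix.diagonal v) = Matrix.diagonal fun i => X - C (v i) := by
    ext i j
    by_cases h : i = j
    · subst h; simp
    · rw [Matrix.charmatrix_apply_ne _ _ _ h, Matrix.diagonal_apply_ne _ h,
        Matrix.diagonal_apply_ne _ h, map_zero, neg_zero]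
  rw [Matrix.charpoly, h, Matrix.det_diagonal]

lemma eig_multiset {M : Matrix m m ℂ} (hM : M.IsHermitian)
    (U : Matrix.unitaryGroup m ℂ) (d : m → ℝ)
    (hMU : M = (U : Matrix m m ℂ) * Matrix.diagonal (Complex.ofReal ∘ d)
      * star (U : Matrix m m ℂ)) :
    Multiset.map hM.eigenvalues Finset.univ.val = Multiset.map d Finset.univ.val := by
  have hroots : ∀ g : m → ℝ,
      (∏ i, (X - C ((g i : ℂ)))).roots = Finset.univ.val.map fun i => ((g i : ℂ)) := by
    intro g
    rw [Finset.prod_eq_multiset_prod]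
    rw [show (Finset.univ.val.map fun i => X - C ((g i : ℂ)))
        = (Finset.univ.val.map fun i => ((g i : ℂ))).map fun a => X - C a by
      rw [Multiset.map_map]; rfl]
    exact Polynomial.roots_multiset_prod_X_sub_C _
  have h1 : M.charpoly = ∏ i, (X - C ((d i : ℂ))) := by
    rw [hMU, charpoly_unitary_conj, _root_.charpoly_diagonal]; rfl
  have h2 : M.charpoly = ∏ i, (X - C ((hM.eigenvalues i : ℂ))) := by
    conv_lhs => rw [hM.spectral_theorem, Unitary.conjStarAlgAut_apply]
    rw [charpoly_unitary_conj hM.eigenvectorUnitary, _root_.charpoly_diagonal]; rfl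
  have h3 := congrArg Polynomial.roots (h2.symm.trans h1)
  rw [hroots, hroots] at h3
  have h4 : Multiset.map Complex.ofReal (Multiset.map hM.eigenvalues Finset.univ.val)
      = Multiset.map Complex.ofReal (Multiset.map d Finset.univ.val) := by
    rw [Multiset.map_map, Multiset.map_map]; exact h3
  exact Multiset.map_injective Complex.ofReal_injective h4

lemma sum_f_eig {M : Matrix m m ℂ} (hM : M.IsHermitian)
    (U : Matrix.unitaryGroup m ℂ) (d : m → ℝ)
    (hMU : M = (U : Matrix m m ℂ) * Matrix.diagonal (Complex.ofReal ∘ d)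
      * star (U : Matrix m m ℂ)) (f : ℝ → ℝ) :
    ∑ k, f (hM.eigenvalues k) = ∑ k, f (d k) := by
  have h := eig_multiset hM U d hMU
  have h2 : (Multiset.map (f ∘ hM.eigenvalues) Finset.univ.val).sum
      = (Multiset.map (f ∘ d) Finset.univ.val).sum := by
    rw [← Multiset.map_map f hM.eigenvalues, ← Multiset.map_map f d, h]
  rw [Finset.sum_eq_multiset_sum, Finset.sum_eq_multiset_sum]
  exact h2

lemma sum_eigenvalues_eq_trace {M : Matrix m m ℂ} (hM : M.IsHermitian) :
    ((∑ k, hM.eigenvalues k : ℝ) : ℂ) = M.trace := by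
  conv_rhs => rw [hM.spectral_theorem, Unitary.conjStarAlgAut_apply]
  rw [Matrix.trace_mul_cycle, (Matrix.mem_unitaryGroup_iff').mp hM.eigenvectorUnitary.2,
    one_mul, Matrix.trace_diagonal]
  push_cast
  rfl

/-- Spectral decomposition of a real scalar multiple of a Hermitian matrix. -/
lemma smul_spectral {M : Matrix m m ℂ} (hM : M.IsHermitian) (c : ℝ) :
    (c : ℂ) • M = (hM.eigenvectorUnitary : Matrix m m ℂ) *
      Matrix.diagonal (Complex.ofReal ∘ fun k => c * hM.eigenvalues k) *
      star (hM.eigenvectorUnitary : Matrix m m ℂ) := by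
  conv_lhs => rw [hM.spectral_theorem, Unitary.conjStarAlgAut_apply]
  rw [← smul_mul_assoc, ← mul_smul_comm]
  congr 2
  ext i j
  rcases eq_or_ne i j with rfl | h
  · simp [Matrix.smul_apply, Matrix.diagonal_apply_eq, Complex.ofReal_mul, Complex.real_smul,
      RCLike.ofReal_alg]
  · simp [Matrix.smul_apply, Matrix.diagonal_apply_ne _ h]

end AuxCharpoly

section AuxBD

variable {m' : Type*} [Fintype m'] [DecidableEq m'] {n : ℕ}

/-- Block diagonal matrix with blocks `V t` on the flag register. -/
noncomputable def BD (V : Fin n → Matrix m' m' ℂ) : Matrix (m' × Fin n) (m' × Fin n) ℂ :=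
  ∑ t, V t ⊗ₖ Matrix.single t t (1 : ℂ)

lemma BD_mul (V W : Fin n → Matrix m' m' ℂ) : BD V * BD W = BD (fun t => V t * W t) := by
  unfold BD
  rw [Finset.sum_mul_sum]
  refine Finset.sum_congr rfl fun t _ => ?_
  rw [Finset.sum_eq_single t]
  · rw [← Matrix.mul_kronecker_mul, Matrix.single_mul_single_same, one_mul]
  · intro s _ hs
    rw [← Matrix.mul_kronecker_mul, Matrix.single_mul_single_of_ne (h := Ne.symm hs),
      Matrix.kronecker_zero]
  · intro h; exact absurd (Finset.mem_univ t) h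

lemma kron_conjTranspose (V : Matrix m' m' ℂ) (W : Matrix (Fin n) (Fin n) ℂ) :
    (V ⊗ₖ W)ᴴ = Vᴴ ⊗ₖ Wᴴ := by
  ext ⟨a, r⟩ ⟨b, s⟩
  simp [Matrix.conjTranspose_apply, Matrix.kroneckerMap_apply, star_mul', mul_comm]

lemma stdBasis_conjTranspose (t : Fin n) :
    (Matrix.single t t (1 : ℂ))ᴴ = Matrix.single t t 1 := by
  ext a b
  simp [Matrix.conjTranspose_apply, Matrix.single, apply_ite (star : ℂ → ℂ), and_comm]

lemma BD_conjTranspose (V : Fin n → Matrix m' m' ℂ) :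
    (BD V)ᴴ = BD (fun t => (V t)ᴴ) := by
  unfold BD
  rw [Matrix.conjTranspose_sum]
  exact Finset.sum_congr rfl fun t _ => by
    rw [kron_conjTranspose, stdBasis_conjTranspose]

lemma BD_one : BD (fun _ : Fin n => (1 : Matrix m' m' ℂ)) = 1 := by
  unfold BD
  ext ⟨a, r⟩ ⟨b, s⟩
  rw [Matrix.sum_apply]
  simp only [Matrix.kroneckerMap_apply, Matrix.single, Matrix.of_apply]
  by_cases h : r = s
  · subst h
    rw [Finset.sum_eq_single r]
    · simp [Matrix.one_apply, Prod.ext_iff]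
    · intro t _ ht; simp [ht]
    · intro h; exact absurd (Finset.mem_univ r) h
  · rw [Finset.sum_eq_zero, Matrix.one_apply_ne (by simp [Prod.ext_iff, h])]
    intro t _
    rcases eq_or_ne t r with rfl | ht
    · simp [h]
    · simp [ht]

lemma BD_diagonal (v : Fin n → m' → ℝ) :
    BD (fun t => Matrix.diagonal (Complex.ofReal ∘ v t))
      = Matrix.diagonal (Complex.ofReal ∘ fun ks : m' × Fin n => v ks.2 ks.1) := by
  unfold BD
  ext ⟨a, r⟩ ⟨b, s⟩
  rw [Matrix.sum_apply]
  simp only [Matrix.kroneckerMap_apply, Matrix.single, Matrix.of_apply]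
  by_cases h : r = s
  · subst h
    rw [Finset.sum_eq_single r]
    · by_cases hab : a = b
      · subst hab; simp [Matrix.diagonal_apply_eq]
      · simp [Matrix.diagonal_apply_ne, hab, Prod.ext_iff,
          Matrix.diagonal_apply_ne _ (fun hc : (a, r) = (b, r) => hab (congrArg Prod.fst hc))]
    · intro t _ ht; simp [ht]
    · intro h; exact absurd (Finset.mem_univ r) h
  · rw [Finset.sum_eq_zero, Matrix.diagonal_apply_ne _ (by simp [Prod.ext_iff, h])]
    intro t _
    rcases eq_or_ne t r with rfl | ht
    · simp [h]
    · simp [ht]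

end AuxBD

section AuxPinch

variable {dA dB n : ℕ} {ι : Type*} [Fintype ι]

lemma sum_kron {m1 m2 : Type*} [Fintype m1] [Fintype m2] {ι' : Type*} (s : Finset ι')
    (M : ι' → Matrix m1 m1 ℂ) (B : Matrix m2 m2 ℂ) :
    (∑ i ∈ s, M i) ⊗ₖ B = ∑ i ∈ s, (M i) ⊗ₖ B := by
  ext ⟨a, b⟩ ⟨c, d⟩
  simp [Matrix.kroneckerMap_apply, Matrix.sum_apply, Finset.sum_mul]

lemma pinch_smul (A : ι → Matrix (Fin dA) (Fin dA) ℂ) (c : ℂ)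
    (ρ : Matrix (Fin dA × Fin dB) (Fin dA × Fin dB) ℂ) :
    pinch A (c • ρ) = c • pinch A ρ := by
  unfold pinch
  rw [Finset.smul_sum]
  exact Finset.sum_congr rfl fun i _ => by
    rw [Matrix.mul_smul, Matrix.smul_mul]

lemma pinchFlag_BD (A : ι → Matrix (Fin dA) (Fin dA) ℂ)
    (V : Fin n → Matrix (Fin dA × Fin dB) (Fin dA × Fin dB) ℂ) :
    pinchFlag A (BD V) = BD (fun t => pinch A (V t)) := by
  unfold pinchFlag BD pinch
  have h1 : ∀ i : ι, (((A i) ⊗ₖ (1 : Matrix (Fin dB) (Fin dB) ℂ)) ⊗ₖ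
        (1 : Matrix (Fin n) (Fin n) ℂ)) * (∑ t, V t ⊗ₖ Matrix.single t t (1 : ℂ)) *
        (((A i) ⊗ₖ (1 : Matrix (Fin dB) (Fin dB) ℂ)) ⊗ₖ (1 : Matrix (Fin n) (Fin n) ℂ))
      = ∑ t, (((A i) ⊗ₖ (1 : Matrix (Fin dB) (Fin dB) ℂ)) * V t *
          ((A i) ⊗ₖ (1 : Matrix (Fin dB) (Fin dB) ℂ))) ⊗ₖ Matrix.single t t (1 : ℂ) := by
    intro i
    rw [Finset.mul_sum, Finset.sum_mul]
    refine Finset.sum_congr rfl fun t _ => ?_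
    rw [← Matrix.mul_kronecker_mul, ← Matrix.mul_kronecker_mul, one_mul, mul_one]
  rw [Finset.sum_congr rfl fun i _ => h1 i, Finset.sum_comm]
  refine Finset.sum_congr rfl fun t _ => ?_
  rw [← sum_kron]

lemma trace_pinch [DecidableEq ι] (A : ι → Matrix (Fin dA) (Fin dA) ℂ)
    (hproj : ∀ i j, A i * A j = if i = j then A i else 0)
    (hsum : ∑ i, A i = 1)
    (ρ : Matrix (Fin dA × Fin dB) (Fin dA × Fin dB) ℂ) :
    (pinch A ρ).trace = ρ.trace := by
  unfold pinch
  rw [Matrix.trace_sum]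
  have h1 : ∀ i, (((A i) ⊗ₖ (1 : Matrix (Fin dB) (Fin dB) ℂ)) * ρ *
        ((A i) ⊗ₖ (1 : Matrix (Fin dB) (Fin dB) ℂ))).trace
      = (((A i) ⊗ₖ (1 : Matrix (Fin dB) (Fin dB) ℂ)) * ρ).trace := by
    intro i
    rw [Matrix.trace_mul_cycle, ← Matrix.mul_kronecker_mul, hproj i i, if_pos rfl,
      Matrix.one_mul]
  rw [Finset.sum_congr rfl fun i _ => h1 i, ← Matrix.trace_sum, ← Finset.sum_mul, ← sum_kron,
    hsum, Matrix.one_kronecker_one, Matrix.one_mul]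

end AuxPinch

theorem flagging_invariance {dA dB n : ℕ} {ι : Type*} [Fintype ι] [DecidableEq ι]
    (A : ι → Matrix (Fin dA) (Fin dA) ℂ)
    (hproj : ∀ i j, A i * A j = if i = j then A i else 0)
    (hherm : ∀ i, (A i)ᴴ = A i)
    (hsum : ∑ i, A i = 1)
    (ρ : Fin n → Matrix (Fin dA × Fin dB) (Fin dA × Fin dB) ℂ)
    (hρ : ∀ t, (ρ t).PosSemidef) (htr : ∀ t, (ρ t).trace = 1)
    (p : Fin n → ℝ) (hp : ∀ t, 0 ≤ p t) (hp1 : ∑ t, p t = 1)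
    (hf : (∑ t, p t • ((ρ t) ⊗ₖ Matrix.single t t (1 : ℂ))).IsHermitian)
    (hΦf : (pinchFlag A (∑ t, p t • ((ρ t) ⊗ₖ Matrix.single t t (1 : ℂ)))).IsHermitian)
    (hΦ : ∀ t, (pinch A (ρ t)).IsHermitian) :
    vnEntropy hΦf - vnEntropy hf
      = ∑ t, p t * (vnEntropy (hΦ t) - vnEntropy (hρ t).isHermitian) := by
  classical
  -- abbreviations
  set e : Fin n → (Fin dA × Fin dB) → ℝ := fun t => (hρ t).isHermitian.eigenvalues with he
  set φ : Fin n → (Fin dA × Fin dB) → ℝ := fun t => (hΦ t).eigenvalues with hφdef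
  -- the flagged state is block diagonal
  have hBDform : (∑ t, p t • ((ρ t) ⊗ₖ Matrix.single t t (1 : ℂ)))
      = BD (fun t => (p t : ℂ) • ρ t) := by
    unfold BD
    refine Finset.sum_congr rfl fun t _ => ?_
    rw [← Matrix.smul_kronecker]
    ext ij kl
    simp [Matrix.smul_apply, Complex.real_smul]
  -- unitaries diagonalizing the blocks
  have unit1 : ∀ t : Fin n, ((hρ t).isHermitian.eigenvectorUnitary : Matrix (Fin dA × Fin dB) (Fin dA × Fin dB) ℂ) *
      ((hρ t).isHermitian.eigenvectorUnitary : Matrix (Fin dA × Fin dB) (Fin dA × Fin dB) ℂ)ᴴ = 1 := fun t => by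
    have := (Matrix.mem_unitaryGroup_iff).mp (hρ t).isHermitian.eigenvectorUnitary.2
    rwa [Matrix.star_eq_conjTranspose] at this
  have unit2 : ∀ t : Fin n, ((hΦ t).eigenvectorUnitary : Matrix (Fin dA × Fin dB) (Fin dA × Fin dB) ℂ) *
      ((hΦ t).eigenvectorUnitary : Matrix (Fin dA × Fin dB) (Fin dA × Fin dB) ℂ)ᴴ = 1 := fun t => by
    have := (Matrix.mem_unitaryGroup_iff).mp (hΦ t).eigenvectorUnitary.2
    rwa [Matrix.star_eq_conjTranspose] at this
  -- block-diagonal unitaries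
  have hW1mem : BD (fun t => ((hρ t).isHermitian.eigenvectorUnitary : Matrix (Fin dA × Fin dB) (Fin dA × Fin dB) ℂ)) ∈
      Matrix.unitaryGroup ((Fin dA × Fin dB) × Fin n) ℂ := by
    rw [Matrix.mem_unitaryGroup_iff, Matrix.star_eq_conjTranspose, BD_conjTranspose, BD_mul]
    rw [show (fun t => ((hρ t).isHermitian.eigenvectorUnitary : Matrix (Fin dA × Fin dB) (Fin dA × Fin dB) ℂ) *
        ((hρ t).isHermitian.eigenvectorUnitary : Matrix (Fin dA × Fin dB) (Fin dA × Fin dB) ℂ)ᴴ)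
      = fun _ => (1 : Matrix (Fin dA × Fin dB) (Fin dA × Fin dB) ℂ) from funext unit1, BD_one]
  have hW2mem : BD (fun t => ((hΦ t).eigenvectorUnitary : Matrix (Fin dA × Fin dB) (Fin dA × Fin dB) ℂ)) ∈
      Matrix.unitaryGroup ((Fin dA × Fin dB) × Fin n) ℂ := by
    rw [Matrix.mem_unitaryGroup_iff, Matrix.star_eq_conjTranspose, BD_conjTranspose, BD_mul]
    rw [show (fun t => ((hΦ t).eigenvectorUnitary : Matrix (Fin dA × Fin dB) (Fin dA × Fin dB) ℂ) *
        ((hΦ t).eigenvectorUnitary : Matrix (Fin dA × Fin dB) (Fin dA × Fin dB) ℂ)ᴴ)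
      = fun _ => (1 : Matrix (Fin dA × Fin dB) (Fin dA × Fin dB) ℂ) from funext unit2, BD_one]
  set W1 : Matrix.unitaryGroup ((Fin dA × Fin dB) × Fin n) ℂ :=
    ⟨BD (fun t => ((hρ t).isHermitian.eigenvectorUnitary : Matrix (Fin dA × Fin dB) (Fin dA × Fin dB) ℂ)), hW1mem⟩ with hW1
  set W2 : Matrix.unitaryGroup ((Fin dA × Fin dB) × Fin n) ℂ :=
    ⟨BD (fun t => ((hΦ t).eigenvectorUnitary : Matrix (Fin dA × Fin dB) (Fin dA × Fin dB) ℂ)), hW2mem⟩ with hW2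
  -- the diagonal entries
  set d1 : (Fin dA × Fin dB) × Fin n → ℝ := fun ks => p ks.2 * e ks.2 ks.1 with hd1
  set d2 : (Fin dA × Fin dB) × Fin n → ℝ := fun ks => p ks.2 * φ ks.2 ks.1 with hd2
  -- decomposition of the flagged state
  have hdec1 : (∑ t, p t • ((ρ t) ⊗ₖ Matrix.single t t (1 : ℂ)))
      = (W1 : Matrix ((Fin dA × Fin dB) × Fin n) ((Fin dA × Fin dB) × Fin n) ℂ) * Matrix.diagonal (Complex.ofReal ∘ d1) * star (W1 : Matrix ((Fin dA × Fin dB) × Fin n) ((Fin dA × Fin dB) × Fin n) ℂ) := by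
    rw [hBDform]
    have hblocks : (fun t => (p t : ℂ) • ρ t)
        = fun t => ((hρ t).isHermitian.eigenvectorUnitary : Matrix (Fin dA × Fin dB) (Fin dA × Fin dB) ℂ) *
            Matrix.diagonal (Complex.ofReal ∘ fun k => p t * e t k) *
            ((hρ t).isHermitian.eigenvectorUnitary : Matrix (Fin dA × Fin dB) (Fin dA × Fin dB) ℂ)ᴴ :=
      funext fun t => smul_spectral (hρ t).isHermitian (p t)
    rw [hblocks, ← BD_mul, ← BD_mul, ← BD_conjTranspose, BD_diagonal]
    rfl
  have hdec2 : pinchFlag A (∑ t, p t • ((ρ t) ⊗ₖ Matrix.single t t (1 : ℂ)))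
      = (W2 : Matrix ((Fin dA × Fin dB) × Fin n) ((Fin dA × Fin dB) × Fin n) ℂ) * Matrix.diagonal (Complex.ofReal ∘ d2) * star (W2 : Matrix ((Fin dA × Fin dB) × Fin n) ((Fin dA × Fin dB) × Fin n) ℂ) := by
    rw [hBDform, pinchFlag_BD]
    have hblocks : (fun t => pinch A ((p t : ℂ) • ρ t))
        = fun t => ((hΦ t).eigenvectorUnitary : Matrix (Fin dA × Fin dB) (Fin dA × Fin dB) ℂ) *
            Matrix.diagonal (Complex.ofReal ∘ fun k => p t * φ t k) *
            ((hΦ t).eigenvectorUnitary : Matrix (Fin dA × Fin dB) (Fin dA × Fin dB) ℂ)ᴴ := by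
      funext t
      rw [pinch_smul]
      exact smul_spectral (hΦ t) (p t)
    rw [hblocks, ← BD_mul, ← BD_mul, ← BD_conjTranspose, BD_diagonal]
    rfl
  -- entropies of the flagged states
  have hS1 : vnEntropy hf = ∑ t, ∑ k, Real.negMulLog (p t * e t k) := by
    have := sum_f_eig hf W1 d1 hdec1 Real.negMulLog
    rw [vnEntropy, this, Fintype.sum_prod_type, Finset.sum_comm]
  have hS2 : vnEntropy hΦf = ∑ t, ∑ k, Real.negMulLog (p t * φ t k) := by
    have := sum_f_eig hΦf W2 d2 hdec2 Real.negMulLog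
    rw [vnEntropy, this, Fintype.sum_prod_type, Finset.sum_comm]
  -- eigenvalue sums are 1
  have he1 : ∀ t, ∑ k, e t k = 1 := by
    intro t
    have h := sum_eigenvalues_eq_trace (hρ t).isHermitian
    rw [htr t] at h
    exact_mod_cast h
  have hφ1 : ∀ t, ∑ k, φ t k = 1 := by
    intro t
    have h := sum_eigenvalues_eq_trace (hΦ t)
    rw [trace_pinch A hproj hsum, htr t] at h
    exact_mod_cast h
  -- final computation
  rw [hS1, hS2, ← Finset.sum_sub_distrib]
  refine Finset.sum_congr rfl fun t _ => ?_
  have hsum1 : ∑ k, Real.negMulLog (p t * e t k)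
      = Real.negMulLog (p t) + p t * vnEntropy (hρ t).isHermitian := by
    calc ∑ k, Real.negMulLog (p t * e t k)
        = ∑ k, (e t k * Real.negMulLog (p t) + p t * Real.negMulLog (e t k)) :=
          Finset.sum_congr rfl fun k _ => Real.negMulLog_mul (p t) (e t k)
      _ = (∑ k, e t k) * Real.negMulLog (p t) + p t * ∑ k, Real.negMulLog (e t k) := by
          rw [Finset.sum_add_distrib, Finset.sum_mul, Finset.mul_sum]
      _ = Real.negMulLog (p t) + p t * vnEntropy (hρ t).isHermitian := by
          rw [he1 t, one_mul, vnEntropy]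
  have hsum2 : ∑ k, Real.negMulLog (p t * φ t k)
      = Real.negMulLog (p t) + p t * vnEntropy (hΦ t) := by
    calc ∑ k, Real.negMulLog (p t * φ t k)
        = ∑ k, (φ t k * Real.negMulLog (p t) + p t * Real.negMulLog (φ t k)) :=
          Finset.sum_congr rfl fun k _ => Real.negMulLog_mul (p t) (φ t k)
      _ = (∑ k, φ t k) * Real.negMulLog (p t) + p t * ∑ k, Real.negMulLog (φ t k) := by
          rw [Finset.sum_add_distrib, Finset.sum_mul, Finset.mul_sum]
      _ = Real.negMulLog (p t) + p t * vnEntropy (hΦ t) := by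
          rw [hφ1 t, one_mul, vnEntropy]
  rw [hsum1, hsum2]
  ring
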